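/- Let n ≥ 5 and α₃,…,αₙ ∈ ℂ with α₃ ≠ 0. Then the transposed 0-Poisson algebra TP₀(0,0,α₃,…,αₙ) is isomorphic to TP₀(0,0,α₃,0,…,0), i.e., to the structure on μ₀ⁿ with [e₁,e₂] = α₃ e₃ and all other basis brackets zero. -/
import Mathlib


open Finset

/-- The null-filiform associative multiplication on `ℂⁿ = Fin n → ℂ`.
The basis vector `e_i` (1-based) corresponds to the coordinate `i - 1`, and
`e_i · e_j = e_{i+j}` if `i + j ≤ n`, and `0` otherwise. -/
noncomputable def nfMul (n : ℕ) (x y : Fin n → ℂ) : Fin n → ℂ :=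
  fun k => ∑ i : Fin n, ∑ j : Fin n,
    if (i : ℕ) + (j : ℕ) + 1 = (k : ℕ) then x i * y j else 0

/-- The 1-based basis vector `e i` of `ℂⁿ` (zero if `i` is out of range `1,…,n`). -/
noncomputable def nfE (n : ℕ) (i : ℕ) : Fin n → ℂ :=
  fun k => if (k : ℕ) + 1 = i then 1 else 0

/-- The coefficient of the basis vector `e i` (1-based) in `x`. -/
noncomputable def nfCoeff (n : ℕ) (x : Fin n → ℂ) (i : ℕ) : ℂ :=
  ∑ k : Fin n, if (k : ℕ) + 1 = i then x k else 0

/-- A Lie bracket (bilinear, alternating, satisfying the Jacobi identity)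
on a complex vector space. -/
structure LieBracketOn (L : Type*) [AddCommGroup L] [Module ℂ L] where
  br : L → L → L
  add_left : ∀ x y z, br (x + y) z = br x z + br y z
  smul_left : ∀ (c : ℂ) (x y : L), br (c • x) y = c • br x y
  add_right : ∀ x y z, br x (y + z) = br x y + br x z
  smul_right : ∀ (c : ℂ) (x y : L), br x (c • y) = c • br x y
  alt : ∀ x, br x x = 0
  jacobi : ∀ x y z, br (br x y) z + br (br y z) x + br (br z x) y = 0

/-- `(μ₀ⁿ, ·, [-,-])` is a transposed `δ`-Poisson algebra:
`δ • (z · [x,y]) = [z·x, y] + [x, z·y]`. -/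
noncomputable def IsTransposedPoisson (n : ℕ) (δ : ℂ) (B : LieBracketOn (Fin n → ℂ)) : Prop :=
  ∀ x y z, δ • nfMul n z (B.br x y) = B.br (nfMul n z x) y + B.br x (nfMul n z y)

/-- `(μ₀ⁿ, ·, [-,-])` is a `δ`-Poisson algebra:
`[x, y·z] = δ • ([x,y]·z + y·[x,z])`. -/
noncomputable def IsDeltaPoisson (n : ℕ) (δ : ℂ) (B : LieBracketOn (Fin n → ℂ)) : Prop :=
  ∀ x y z, B.br x (nfMul n y z) = δ • (nfMul n (B.br x y) z + nfMul n y (B.br x z))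

/-- The bracket of the transposed 0-Poisson algebra `TP₀(α₁,…,αₙ)` on `μ₀ⁿ`:
determined by `[e₁,e₂] = ∑_{t=1}^n αₜ eₜ` and `[eᵢ,eⱼ] = 0` for all other
pairs `i < j`. -/
noncomputable def brTP0 (n : ℕ) (α : ℕ → ℂ) (x y : Fin n → ℂ) : Fin n → ℂ :=
  (nfCoeff n x 1 * nfCoeff n y 2 - nfCoeff n x 2 * nfCoeff n y 1) •
    ∑ t ∈ Finset.Icc 1 n, α t • nfE n t

/-- The bracket of the transposed 1-Poisson algebra `TP₁(α₂,…,αₙ)` on `μ₀ⁿ`: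
determined by `[e₁,eᵢ] = ∑_{t=i}^n α_{t-i+2} eₜ` for `2 ≤ i ≤ n` and
`[eᵢ,eⱼ] = 0` for `2 ≤ i < j ≤ n`. -/
noncomputable def brTP1 (n : ℕ) (α : ℕ → ℂ) (x y : Fin n → ℂ) : Fin n → ℂ :=
  ∑ i ∈ Finset.Icc 2 n,
    (nfCoeff n x 1 * nfCoeff n y i - nfCoeff n x i * nfCoeff n y 1) •
      ∑ t ∈ Finset.Icc i n, α (t + 2 - i) • nfE n t

/-- The bracket of the transposed `δ`-Poisson algebra `TP_δ(a, b, c)`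
(`a = α_{n-2}`, `b = α_{n-1}`, `c = αₙ`) on `μ₀ⁿ`: determined by
`[e₁,e₂] = a e_{n-2} + b e_{n-1} + c eₙ`, `[e₁,e₃] = δ(a e_{n-1} + b eₙ)`,
`[e₂,e₃] = ((δ²-δ)/2) a eₙ`, `[e₁,e₄] = ((δ²+δ)/2) a eₙ`, and `[eᵢ,eⱼ] = 0`
for all other pairs `i < j`. -/
noncomputable def brTPd (n : ℕ) (δ a b c : ℂ) (x y : Fin n → ℂ) : Fin n → ℂ :=
  (nfCoeff n x 1 * nfCoeff n y 2 - nfCoeff n x 2 * nfCoeff n y 1) •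
      (a • nfE n (n-2) + b • nfE n (n-1) + c • nfE n n)
  + (nfCoeff n x 1 * nfCoeff n y 3 - nfCoeff n x 3 * nfCoeff n y 1) •
      (δ • (a • nfE n (n-1) + b • nfE n n))
  + (nfCoeff n x 2 * nfCoeff n y 3 - nfCoeff n x 3 * nfCoeff n y 2) •
      (((δ^2 - δ)/2 * a) • nfE n n)
  + (nfCoeff n x 1 * nfCoeff n y 4 - nfCoeff n x 4 * nfCoeff n y 1) •
      (((δ^2 + δ)/2 * a) • nfE n n)

/-- Two bracket structures on `μ₀ⁿ` are isomorphic (as transposed δ-Poisson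
algebras): there is a linear bijection preserving both `·` and `[-,-]`. -/
noncomputable def TPIso (n : ℕ) (B B' : (Fin n → ℂ) → (Fin n → ℂ) → (Fin n → ℂ)) : Prop :=
  ∃ φ : (Fin n → ℂ) ≃ₗ[ℂ] (Fin n → ℂ),
    (∀ x y, φ (nfMul n x y) = nfMul n (φ x) (φ y)) ∧
    ∀ x y, φ (B x y) = B' (φ x) (φ y)

section Aux

variable {n : ℕ}

lemma sum_pick {M : Type*} [AddCommMonoid M] {m : ℕ} (hm : m < n) (f : Fin n → M) :
    (∑ i : Fin n, if (i : ℕ) = m then f i else 0) = f ⟨m, hm⟩ := by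
  rw [Finset.sum_eq_single (⟨m, hm⟩ : Fin n)]
  · simp
  · intro b _ hb
    rw [if_neg]
    intro h; exact hb (Fin.ext h)
  · intro h; exact absurd (Finset.mem_univ _) h

lemma nfMul_apply (x y : Fin n → ℂ) (k : Fin n) :
    nfMul n x y k = ∑ i : Fin n, ∑ j : Fin n,
      if (i : ℕ) + (j : ℕ) + 1 = (k : ℕ) then x i * y j else 0 := rfl

lemma nfMul_support {x y : Fin n → ℂ} {a b : ℕ}
    (hx : ∀ i : Fin n, (i:ℕ) < a → x i = 0) (hy : ∀ j : Fin n, (j:ℕ) < b → y j = 0)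
    (k : Fin n) (hk : (k:ℕ) < a + b + 1) : nfMul n x y k = 0 := by
  rw [nfMul_apply]
  refine Finset.sum_eq_zero fun i _ => Finset.sum_eq_zero fun j _ => ?_
  by_cases h : (i:ℕ)+(j:ℕ)+1 = (k:ℕ)
  · rw [if_pos h]
    by_cases hi : (i:ℕ) < a
    · rw [hx i hi, zero_mul]
    · rw [hy j (by omega), mul_zero]
  · rw [if_neg h]

lemma nfMul_lowest {x y : Fin n → ℂ} {a b : ℕ}
    (hx : ∀ i : Fin n, (i:ℕ) < a → x i = 0) (hy : ∀ j : Fin n, (j:ℕ) < b → y j = 0)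
    (ia jb k : Fin n) (hia : (ia:ℕ) = a) (hjb : (jb:ℕ) = b) (hk : (k:ℕ) = a + b + 1) :
    nfMul n x y k = x ia * y jb := by
  rw [nfMul_apply]
  rw [Finset.sum_eq_single ia]
  · rw [Finset.sum_eq_single jb]
    · rw [if_pos (by omega)]
    · intro j _ hj
      rw [if_neg]
      intro h; apply hj; apply Fin.ext; omega
    · intro h; exact absurd (Finset.mem_univ _) h
  · intro i _ hi
    have hi' : (i:ℕ) ≠ a := fun h => hi (Fin.ext (by omega))
    refine Finset.sum_eq_zero fun j _ => ?_
    by_cases h : (i:ℕ)+(j:ℕ)+1 = (k:ℕ)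
    · rw [if_pos h]
      by_cases h2 : (i:ℕ) < a
      · rw [hx i h2, zero_mul]
      · rw [hy j (by omega), mul_zero]
    · rw [if_neg h]
  · intro h; exact absurd (Finset.mem_univ _) h

lemma nfMul_comm (x y : Fin n → ℂ) : nfMul n x y = nfMul n y x := by
  funext k
  rw [nfMul_apply, nfMul_apply, Finset.sum_comm]
  refine Finset.sum_congr rfl fun i _ => Finset.sum_congr rfl fun j _ => ?_
  by_cases h : (i:ℕ)+(j:ℕ)+1 = (k:ℕ)
  · rw [if_pos h, if_pos (by omega), mul_comm]
  · rw [if_neg h, if_neg (by omega)]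

lemma nfMul_add_left (x x' y : Fin n → ℂ) :
    nfMul n (x + x') y = nfMul n x y + nfMul n x' y := by
  funext k
  simp only [nfMul_apply, Pi.add_apply, add_mul, ← Finset.sum_add_distrib]
  refine Finset.sum_congr rfl fun i _ => Finset.sum_congr rfl fun j _ => ?_
  split <;> simp

lemma nfMul_smul_left (c : ℂ) (x y : Fin n → ℂ) :
    nfMul n (c • x) y = c • nfMul n x y := by
  funext k
  simp only [nfMul_apply, Pi.smul_apply, smul_eq_mul, Finset.mul_sum]
  refine Finset.sum_congr rfl fun i _ => Finset.sum_congr rfl fun j _ => ?_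
  split <;> simp [mul_assoc]

lemma nfMul_add_right (x y y' : Fin n → ℂ) :
    nfMul n x (y + y') = nfMul n x y + nfMul n x y' := by
  rw [nfMul_comm, nfMul_add_left, nfMul_comm y x, nfMul_comm y' x]

lemma nfMul_smul_right (c : ℂ) (x y : Fin n → ℂ) :
    nfMul n x (c • y) = c • nfMul n x y := by
  rw [nfMul_comm, nfMul_smul_left, nfMul_comm y x]

noncomputable def mulL (n : ℕ) : (Fin n → ℂ) →ₗ[ℂ] (Fin n → ℂ) →ₗ[ℂ] (Fin n → ℂ) :=
  LinearMap.mk₂ ℂ (nfMul n) nfMul_add_left nfMul_smul_left nfMul_add_right nfMul_smul_right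

lemma nfMul_sum_left {β : Type*} (s : Finset β) (f : β → Fin n → ℂ) (y : Fin n → ℂ) :
    nfMul n (∑ l ∈ s, f l) y = ∑ l ∈ s, nfMul n (f l) y := by
  show mulL n (∑ l ∈ s, f l) y = _
  rw [map_sum, LinearMap.sum_apply]
  rfl

lemma nfMul_sum_right {β : Type*} (s : Finset β) (x : Fin n → ℂ) (f : β → Fin n → ℂ) :
    nfMul n x (∑ l ∈ s, f l) = ∑ l ∈ s, nfMul n x (f l) := by
  show mulL n x (∑ l ∈ s, f l) = _
  rw [map_sum]
  rfl



lemma ite_sum {β : Type*} {c : Prop} [Decidable c] (s : Finset β) (f : β → ℂ) :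
    (if c then ∑ i ∈ s, f i else 0) = ∑ i ∈ s, if c then f i else 0 := by
  split <;> simp

lemma nfMul_assoc (x y z : Fin n → ℂ) :
    nfMul n (nfMul n x y) z = nfMul n x (nfMul n y z) := by
  funext k
  have L : nfMul n (nfMul n x y) z k
      = ∑ c : Fin n, ∑ a : Fin n, ∑ b : Fin n,
          if (a:ℕ)+(b:ℕ)+(c:ℕ)+2 = (k:ℕ) then x a * y b * z c else 0 := by
    rw [nfMul_apply, Finset.sum_comm]
    refine Finset.sum_congr rfl fun c _ => ?_
    have : ∀ i : Fin n, (if (i:ℕ)+(c:ℕ)+1 = (k:ℕ) then nfMul n x y i * z c else 0)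
        = ∑ a : Fin n, ∑ b : Fin n,
            if ((i:ℕ)+(c:ℕ)+1 = (k:ℕ) ∧ (a:ℕ)+(b:ℕ)+1 = (i:ℕ)) then x a * y b * z c else 0 := by
      intro i
      rw [nfMul_apply, Finset.sum_mul, ite_sum]
      refine Finset.sum_congr rfl fun a _ => ?_
      rw [Finset.sum_mul, ite_sum]
      refine Finset.sum_congr rfl fun b _ => ?_
      by_cases h1 : (i:ℕ)+(c:ℕ)+1 = (k:ℕ)
      · by_cases h2 : (a:ℕ)+(b:ℕ)+1 = (i:ℕ)
        · rw [if_pos h1, if_pos h2, if_pos ⟨h1, h2⟩]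
        · rw [if_pos h1, if_neg h2, if_neg (by omega), zero_mul]
      · rw [if_neg h1, if_neg (by omega)]
    rw [Finset.sum_congr rfl fun i _ => this i]
    rw [Finset.sum_comm]
    refine Finset.sum_congr rfl fun a _ => ?_
    rw [Finset.sum_comm]
    refine Finset.sum_congr rfl fun b _ => ?_
    by_cases h : (a:ℕ)+(b:ℕ)+(c:ℕ)+2 = (k:ℕ)
    · rw [if_pos h]
      have hab : (a:ℕ)+(b:ℕ)+1 < n := by have := k.isLt; omega
      calc (∑ i : Fin n, if ((i:ℕ)+(c:ℕ)+1 = (k:ℕ) ∧ (a:ℕ)+(b:ℕ)+1 = (i:ℕ)) then x a * y b * z c else 0)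
          = ∑ i : Fin n, if (i:ℕ) = (a:ℕ)+(b:ℕ)+1 then x a * y b * z c else 0 := by
            refine Finset.sum_congr rfl fun i _ => ?_
            by_cases h2 : (i:ℕ) = (a:ℕ)+(b:ℕ)+1
            · rw [if_pos h2, if_pos (by omega)]
            · rw [if_neg h2, if_neg (by omega)]
        _ = x a * y b * z c := sum_pick hab _
    · rw [if_neg h]
      exact Finset.sum_eq_zero fun i _ => by rw [if_neg (by omega)]
  have R : nfMul n x (nfMul n y z) k
      = ∑ a : Fin n, ∑ b : Fin n, ∑ c : Fin n,
          if (a:ℕ)+(b:ℕ)+(c:ℕ)+2 = (k:ℕ) then x a * y b * z c else 0 := by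
    rw [nfMul_apply]
    refine Finset.sum_congr rfl fun a _ => ?_
    have : ∀ j : Fin n, (if (a:ℕ)+(j:ℕ)+1 = (k:ℕ) then x a * nfMul n y z j else 0)
        = ∑ b : Fin n, ∑ c : Fin n,
            if ((a:ℕ)+(j:ℕ)+1 = (k:ℕ) ∧ (b:ℕ)+(c:ℕ)+1 = (j:ℕ)) then x a * y b * z c else 0 := by
      intro j
      rw [nfMul_apply, Finset.mul_sum, ite_sum]
      refine Finset.sum_congr rfl fun b _ => ?_
      rw [Finset.mul_sum, ite_sum]
      refine Finset.sum_congr rfl fun c _ => ?_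
      by_cases h1 : (a:ℕ)+(j:ℕ)+1 = (k:ℕ)
      · by_cases h2 : (b:ℕ)+(c:ℕ)+1 = (j:ℕ)
        · rw [if_pos h1, if_pos h2, if_pos ⟨h1, h2⟩, mul_assoc]
        · rw [if_pos h1, if_neg h2, if_neg (by omega), mul_zero]
      · rw [if_neg h1, if_neg (by omega)]
    rw [Finset.sum_congr rfl fun j _ => this j]
    rw [Finset.sum_comm]
    refine Finset.sum_congr rfl fun b _ => ?_
    rw [Finset.sum_comm]
    refine Finset.sum_congr rfl fun c _ => ?_
    by_cases h : (a:ℕ)+(b:ℕ)+(c:ℕ)+2 = (k:ℕ)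
    · rw [if_pos h]
      have hbc : (b:ℕ)+(c:ℕ)+1 < n := by have := k.isLt; omega
      calc (∑ j : Fin n, if ((a:ℕ)+(j:ℕ)+1 = (k:ℕ) ∧ (b:ℕ)+(c:ℕ)+1 = (j:ℕ)) then x a * y b * z c else 0)
          = ∑ j : Fin n, if (j:ℕ) = (b:ℕ)+(c:ℕ)+1 then x a * y b * z c else 0 := by
            refine Finset.sum_congr rfl fun j _ => ?_
            by_cases h2 : (j:ℕ) = (b:ℕ)+(c:ℕ)+1
            · rw [if_pos h2, if_pos (by omega)]
            · rw [if_neg h2, if_neg (by omega)]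
        _ = x a * y b * z c := sum_pick hbc _
    · rw [if_neg h]
      exact Finset.sum_eq_zero fun j _ => by rw [if_neg (by omega)]
  rw [L, R, Finset.sum_comm]
  refine Finset.sum_congr rfl fun a _ => Finset.sum_comm


/-- `pw n p k` is the `(k+1)`-st power of `p` under `nfMul`. -/
noncomputable def pw (n : ℕ) (p : Fin n → ℂ) : ℕ → (Fin n → ℂ)
  | 0 => p
  | (k+1) => nfMul n p (pw n p k)

lemma pw_support (p : Fin n → ℂ) (m : ℕ) :
    ∀ k : Fin n, (k:ℕ) < m → pw n p m k = 0 := by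
  induction m with
  | zero => intro k hk; omega
  | succ m ih =>
      intro k hk
      exact nfMul_support (a := 0) (b := m) (fun i hi => absurd hi (by omega)) ih k (by omega)

lemma pw_lowest (p : Fin n → ℂ) (m : ℕ) (km z : Fin n) (hkm : (km:ℕ) = m) (hz : (z:ℕ) = 0) :
    pw n p m km = p z ^ (m+1) := by
  induction m generalizing km with
  | zero =>
      have : km = z := Fin.ext (by omega)
      rw [this, pow_one]
      rfl
  | succ m ih =>
      have hm : m < n := by omega
      rw [show pw n p (m+1) = nfMul n p (pw n p m) from rfl]
      rw [nfMul_lowest (a := 0) (b := m) (fun i hi => absurd hi (by omega)) (pw_support p m)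
        z ⟨m, hm⟩ km hz rfl (by omega)]
      rw [ih ⟨m, hm⟩ rfl]
      ring

lemma pw_zero_of_ge (p : Fin n → ℂ) (m : ℕ) (hm : n ≤ m) : pw n p m = 0 := by
  funext k
  exact pw_support p m k (by omega)

lemma pw_mul (p : Fin n → ℂ) (a b : ℕ) :
    nfMul n (pw n p a) (pw n p b) = pw n p (a + b + 1) := by
  induction a with
  | zero =>
      rw [Nat.zero_add]
      rfl
  | succ a ih =>
      have h1 : a + 1 + b + 1 = (a + b + 1) + 1 := by omega
      rw [h1, show pw n p (a+1) = nfMul n p (pw n p a) from rfl,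
        show pw n p ((a+b+1)+1) = nfMul n p (pw n p (a+b+1)) from rfl,
        nfMul_assoc, ih]

/-- The substitution map associated to `p`. -/
noncomputable def phi (n : ℕ) (p : Fin n → ℂ) : (Fin n → ℂ) →ₗ[ℂ] (Fin n → ℂ) where
  toFun x := ∑ k : Fin n, x k • pw n p (k:ℕ)
  map_add' x y := by simp [add_smul, Finset.sum_add_distrib]
  map_smul' c x := by simp [smul_smul, Finset.smul_sum]

lemma phi_apply (p x : Fin n → ℂ) : phi n p x = ∑ k : Fin n, x k • pw n p (k:ℕ) := rfl

lemma phi_mul (p x y : Fin n → ℂ) :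
    phi n p (nfMul n x y) = nfMul n (phi n p x) (phi n p y) := by
  rw [phi_apply, phi_apply, phi_apply, nfMul_sum_left]
  have RHS : ∀ i : Fin n, nfMul n (x i • pw n p (i:ℕ)) (∑ k : Fin n, y k • pw n p (k:ℕ))
      = ∑ j : Fin n, (x i * y j) • pw n p ((i:ℕ)+(j:ℕ)+1) := by
    intro i
    rw [nfMul_sum_right]
    refine Finset.sum_congr rfl fun j _ => ?_
    rw [nfMul_smul_left, nfMul_smul_right, pw_mul, smul_smul]
  rw [Finset.sum_congr rfl fun i _ => RHS i]
  -- LHS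
  have LHS : ∀ k : Fin n, nfMul n x y k • pw n p (k:ℕ)
      = ∑ i : Fin n, ∑ j : Fin n,
          if (i:ℕ)+(j:ℕ)+1 = (k:ℕ) then (x i * y j) • pw n p (k:ℕ) else 0 := by
    intro k
    show (∑ i : Fin n, ∑ j : Fin n,
      if (i : ℕ) + (j : ℕ) + 1 = (k : ℕ) then x i * y j else 0) • pw n p (k:ℕ) = _
    rw [Finset.sum_smul]
    refine Finset.sum_congr rfl fun i _ => ?_
    rw [Finset.sum_smul]
    refine Finset.sum_congr rfl fun j _ => ?_
    split <;> simp
  rw [Finset.sum_congr rfl fun k _ => LHS k, Finset.sum_comm]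
  refine Finset.sum_congr rfl fun i _ => ?_
  rw [Finset.sum_comm]
  refine Finset.sum_congr rfl fun j _ => ?_
  by_cases h : (i:ℕ)+(j:ℕ)+1 < n
  · calc (∑ k : Fin n, if (i:ℕ)+(j:ℕ)+1 = (k:ℕ) then (x i * y j) • pw n p (k:ℕ) else 0)
        = ∑ k : Fin n, if (k:ℕ) = (i:ℕ)+(j:ℕ)+1 then (x i * y j) • pw n p (k:ℕ) else 0 := by
          refine Finset.sum_congr rfl fun k _ => ?_
          by_cases h2 : (i:ℕ)+(j:ℕ)+1 = (k:ℕ)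
          · rw [if_pos h2, if_pos h2.symm]
          · rw [if_neg h2, if_neg (Ne.symm h2)]
      _ = (x i * y j) • pw n p ((i:ℕ)+(j:ℕ)+1) := by rw [sum_pick h]
  · rw [pw_zero_of_ge p _ (by omega), smul_zero]
    exact Finset.sum_eq_zero fun k _ => by rw [if_neg (by omega)]

lemma phi_injective (p : Fin n → ℂ) (z : Fin n) (hz : (z:ℕ) = 0) (hp0 : p z = 1) :
    Function.Injective (phi n p) := by
  rw [injective_iff_map_eq_zero]
  intro x hx
  have key : ∀ m : ℕ, ∀ k : Fin n, (k:ℕ) = m → x k = 0 := by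
    intro m
    induction m using Nat.strong_induction_on with
    | _ m ih =>
      intro k hk
      have h0 : (phi n p x) k = 0 := by rw [hx]; rfl
      rw [phi_apply, Finset.sum_apply] at h0
      have : ∀ l : Fin n, l ≠ k → (x l • pw n p (l:ℕ)) k = 0 := by
        intro l hl
        rcases Nat.lt_or_ge (l:ℕ) m with h | h
        · rw [ih _ h l rfl, zero_smul]; rfl
        · have : (l:ℕ) ≠ m := fun hh => hl (Fin.ext (by omega))
          have : (k:ℕ) < (l:ℕ) := by omega
          show x l * pw n p (l:ℕ) k = 0
          rw [pw_support p _ k this, mul_zero]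
      rw [Finset.sum_eq_single k (fun l _ hl => this l hl)
        (fun h => absurd (Finset.mem_univ _) h)] at h0
      have hpk : pw n p (k:ℕ) k = 1 := by
        rw [pw_lowest p (k:ℕ) k z rfl hz, hp0, one_pow]
      simpa [hpk] using h0
  funext k
  exact key (k:ℕ) k rfl

lemma phi_bijective (p : Fin n → ℂ) (z : Fin n) (hz : (z:ℕ) = 0) (hp0 : p z = 1) :
    Function.Bijective (phi n p) :=
  ⟨phi_injective p z hz hp0,
   (LinearMap.injective_iff_surjective).mp (phi_injective p z hz hp0)⟩


/-- unit vector at coordinate `j` -/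
noncomputable def uv (n j : ℕ) : Fin n → ℂ := fun k => if (k:ℕ) = j then 1 else 0

lemma uv_supp (j : ℕ) : ∀ k : Fin n, (k:ℕ) < j → uv n j k = 0 :=
  fun k hk => if_neg (by omega)

lemma uv_self (j : ℕ) (k : Fin n) (hk : (k:ℕ) = j) : uv n j k = 1 := if_pos hk

lemma pw2_expand (p d : Fin n → ℂ) (t : ℂ) :
    pw n (p + t • d) 2 = pw n p 2
      + t • (nfMul n d (nfMul n p p) + nfMul n p (nfMul n d p) + nfMul n p (nfMul n p d))
      + (t*t) • (nfMul n d (nfMul n d p) + nfMul n d (nfMul n p d) + nfMul n p (nfMul n d d))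
      + (t*t*t) • nfMul n d (nfMul n d d) := by
  show nfMul n (p + t • d) (nfMul n (p + t • d) (p + t • d)) = _
  rw [show pw n p 2 = nfMul n p (nfMul n p p) from rfl]
  simp only [nfMul_add_left, nfMul_add_right, nfMul_smul_left, nfMul_smul_right,
    smul_add, smul_smul]
  module

variable {j : ℕ} {p : Fin n → ℂ}

lemma trivsupp : ∀ i : Fin n, (i:ℕ) < 0 → p i = 0 := fun i hi => absurd hi (by omega)

lemma perturb_low (hj : 1 ≤ j) (t : ℂ) (k : Fin n) (hk : (k:ℕ) ≤ j + 1) :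
    pw n (p + t • uv n j) 2 k = pw n p 2 k := by
  rw [pw2_expand]
  have hpp : ∀ k : Fin n, (k:ℕ) < 0 + 0 + 1 → nfMul n p p k = 0 :=
    fun k hk => nfMul_support trivsupp trivsupp k hk
  have hdp : ∀ k : Fin n, (k:ℕ) < j + 0 + 1 → nfMul n (uv n j) p k = 0 :=
    fun k hk => nfMul_support (uv_supp j) trivsupp k hk
  have hpd : ∀ k : Fin n, (k:ℕ) < 0 + j + 1 → nfMul n p (uv n j) k = 0 :=
    fun k hk => nfMul_support trivsupp (uv_supp j) k hk
  have hdd : ∀ k : Fin n, (k:ℕ) < j + j + 1 → nfMul n (uv n j) (uv n j) k = 0 :=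
    fun k hk => nfMul_support (uv_supp j) (uv_supp j) k hk
  have t1 : nfMul n (uv n j) (nfMul n p p) k = 0 :=
    nfMul_support (a := j) (b := 1) (uv_supp j) (fun k hk => hpp k (by omega)) k (by omega)
  have t2 : nfMul n p (nfMul n (uv n j) p) k = 0 :=
    nfMul_support (a := 0) (b := j+1) trivsupp (fun k hk => hdp k (by omega)) k (by omega)
  have t3 : nfMul n p (nfMul n p (uv n j)) k = 0 :=
    nfMul_support (a := 0) (b := j+1) trivsupp (fun k hk => hpd k (by omega)) k (by omega)
  have s1 : nfMul n (uv n j) (nfMul n (uv n j) p) k = 0 :=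
    nfMul_support (a := j) (b := j+1) (uv_supp j) (fun k hk => hdp k (by omega)) k (by omega)
  have s2 : nfMul n (uv n j) (nfMul n p (uv n j)) k = 0 :=
    nfMul_support (a := j) (b := j+1) (uv_supp j) (fun k hk => hpd k (by omega)) k (by omega)
  have s3 : nfMul n p (nfMul n (uv n j) (uv n j)) k = 0 :=
    nfMul_support (a := 0) (b := 2*j+1) trivsupp (fun k hk => hdd k (by omega)) k (by omega)
  have c1 : nfMul n (uv n j) (nfMul n (uv n j) (uv n j)) k = 0 :=
    nfMul_support (a := j) (b := 2*j+1) (uv_supp j) (fun k hk => hdd k (by omega)) k (by omega)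
  simp [t1, t2, t3, s1, s2, s3, c1]

lemma perturb_key (z : Fin n) (hz : (z:ℕ) = 0) (hp0 : p z = 1) (hj : 1 ≤ j) (t : ℂ)
    (k : Fin n) (hk : (k:ℕ) = j + 2) :
    pw n (p + t • uv n j) 2 k = pw n p 2 k + 3 * t := by
  have hjn : j < n := by omega
  have h1n : 1 < n := by omega
  have hj1n : j + 1 < n := by omega
  rw [pw2_expand]
  have hpp : ∀ k : Fin n, (k:ℕ) < 0 + 0 + 1 → nfMul n p p k = 0 :=
    fun k hk => nfMul_support trivsupp trivsupp k hk
  have hdp : ∀ k : Fin n, (k:ℕ) < j + 0 + 1 → nfMul n (uv n j) p k = 0 :=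
    fun k hk => nfMul_support (uv_supp j) trivsupp k hk
  have hpd : ∀ k : Fin n, (k:ℕ) < 0 + j + 1 → nfMul n p (uv n j) k = 0 :=
    fun k hk => nfMul_support trivsupp (uv_supp j) k hk
  have hdd : ∀ k : Fin n, (k:ℕ) < j + j + 1 → nfMul n (uv n j) (uv n j) k = 0 :=
    fun k hk => nfMul_support (uv_supp j) (uv_supp j) k hk
  have t1 : nfMul n (uv n j) (nfMul n p p) k = 1 := by
    rw [nfMul_lowest (a := j) (b := 1) (uv_supp j) (fun k hk => hpp k (by omega))
      ⟨j, hjn⟩ ⟨1, h1n⟩ k rfl rfl (by omega)]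
    rw [nfMul_lowest (a := 0) (b := 0) trivsupp trivsupp z z ⟨1, h1n⟩ hz hz (by simp [hz])]
    rw [uv_self j ⟨j, hjn⟩ rfl, hp0]
    ring
  have t2 : nfMul n p (nfMul n (uv n j) p) k = 1 := by
    rw [nfMul_lowest (a := 0) (b := j+1) trivsupp (fun k hk => hdp k (by omega))
      z ⟨j+1, hj1n⟩ k hz rfl (by omega)]
    rw [nfMul_lowest (a := j) (b := 0) (uv_supp j) trivsupp ⟨j, hjn⟩ z ⟨j+1, hj1n⟩ rfl hz (by simp)]
    rw [uv_self j ⟨j, hjn⟩ rfl, hp0]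
    ring
  have t3 : nfMul n p (nfMul n p (uv n j)) k = 1 := by
    rw [nfMul_lowest (a := 0) (b := j+1) trivsupp (fun k hk => hpd k (by omega))
      z ⟨j+1, hj1n⟩ k hz rfl (by omega)]
    rw [nfMul_lowest (a := 0) (b := j) trivsupp (uv_supp j) z ⟨j, hjn⟩ ⟨j+1, hj1n⟩ hz rfl (by simp)]
    rw [uv_self j ⟨j, hjn⟩ rfl, hp0]
    ring
  have s1 : nfMul n (uv n j) (nfMul n (uv n j) p) k = 0 :=
    nfMul_support (a := j) (b := j+1) (uv_supp j) (fun k hk => hdp k (by omega)) k (by omega)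
  have s2 : nfMul n (uv n j) (nfMul n p (uv n j)) k = 0 :=
    nfMul_support (a := j) (b := j+1) (uv_supp j) (fun k hk => hpd k (by omega)) k (by omega)
  have s3 : nfMul n p (nfMul n (uv n j) (uv n j)) k = 0 :=
    nfMul_support (a := 0) (b := 2*j+1) trivsupp (fun k hk => hdd k (by omega)) k (by omega)
  have c1 : nfMul n (uv n j) (nfMul n (uv n j) (uv n j)) k = 0 :=
    nfMul_support (a := j) (b := 2*j+1) (uv_supp j) (fun k hk => hdd k (by omega)) k (by omega)
  simp [t1, t2, t3, s1, s2, s3, c1]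
  ring


lemma cube_root (hn : 5 ≤ n) (w : Fin n → ℂ)
    (hw0 : ∀ k : Fin n, (k:ℕ) = 0 → w k = 0) (hw1 : ∀ k : Fin n, (k:ℕ) = 1 → w k = 0)
    (hw2 : ∀ k : Fin n, (k:ℕ) = 2 → w k = 1) :
    ∃ p : Fin n → ℂ, (∀ z : Fin n, (z:ℕ) = 0 → p z = 1) ∧ pw n p 2 = w := by
  have main : ∀ m : ℕ, ∃ p : Fin n → ℂ,
      (∀ z : Fin n, (z:ℕ) = 0 → p z = 1) ∧ ∀ k : Fin n, (k:ℕ) ≤ m → pw n p 2 k = w k := by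
    intro m
    induction m with
    | zero =>
        refine ⟨uv n 0, fun z hz => if_pos hz, fun k hk => ?_⟩
        rw [pw_support _ 2 k (by omega), hw0 k (by omega)]
    | succ m ih =>
        obtain ⟨p, hp1, hp⟩ := ih
        by_cases hcase : m + 1 < n ∧ 3 ≤ m + 1
        · obtain ⟨hmn, hm3⟩ := hcase
          have hj1 : 1 ≤ m - 1 := by omega
          let kk : Fin n := ⟨m+1, hmn⟩
          set t := (w kk - pw n p 2 kk)/3 with htdef
          refine ⟨p + t • uv n (m-1), ?_, ?_⟩
          · intro z hz
            have h1 : uv n (m-1) z = 0 := if_neg (by omega)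
            have h2 : p z = 1 := hp1 z hz
            simp [h1, h2]
          · intro k hk
            rcases Nat.lt_or_ge (k:ℕ) (m+1) with h | h
            · rw [perturb_low (j := m-1) hj1 t k (by omega), hp k (by omega)]
            · have hk' : (k:ℕ) = m+1 := by omega
              have hz0 : (0:ℕ) < n := by omega
              rw [perturb_key (j := m-1) ⟨0, hz0⟩ rfl (hp1 _ rfl) hj1 t k (by omega)]
              have hkkk : kk = k := Fin.ext (by simp [kk]; omega)
              rw [← hkkk, htdef]
              ring
        · refine ⟨p, hp1, fun k hk => ?_⟩
          rcases Nat.lt_or_ge (k:ℕ) (m+1) with h | h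
          · exact hp k (by omega)
          · have hk' : (k:ℕ) = m+1 := by omega
            have hmn : m + 1 < n := by have := k.isLt; omega
            have h3 : m + 1 < 3 := by
              by_contra hh
              exact hcase ⟨hmn, by omega⟩
            have hz0 : (0:ℕ) < n := by omega
            rcases Nat.lt_or_ge (k:ℕ) 2 with h2 | h2
            · rw [pw_support _ 2 k h2]
              rcases Nat.lt_or_ge (k:ℕ) 1 with h1 | h1
              · rw [hw0 k (by omega)]
              · rw [hw1 k (by omega)]
            · have : (k:ℕ) = 2 := by omega
              rw [pw_lowest p 2 k ⟨0, hz0⟩ this rfl, hp1 _ rfl, one_pow, hw2 k this]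
  obtain ⟨p, hp1, hp⟩ := main n
  exact ⟨p, hp1, funext fun k => hp k (le_of_lt k.isLt)⟩

lemma nfCoeff_succ (x : Fin n → ℂ) (m : ℕ) (hm : m < n) : nfCoeff n x (m+1) = x ⟨m, hm⟩ := by
  show (∑ k : Fin n, if (k:ℕ)+1 = m+1 then x k else 0) = _
  calc (∑ k : Fin n, if (k:ℕ)+1 = m+1 then x k else 0)
      = ∑ k : Fin n, if (k:ℕ) = m then x k else 0 := by
        refine Finset.sum_congr rfl fun k _ => ?_
        by_cases h : (k:ℕ) = m
        · rw [if_pos (by omega), if_pos h]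
        · rw [if_neg (by omega), if_neg h]
    _ = x ⟨m, hm⟩ := sum_pick hm x

lemma sum_alpha (α : ℕ → ℂ) (k : Fin n) :
    (∑ t ∈ Finset.Icc 1 n, α t • nfE n t) k = α ((k:ℕ)+1) := by
  rw [Finset.sum_apply]
  rw [Finset.sum_eq_single ((k:ℕ)+1)]
  · simp [nfE]
  · intro t ht hne
    have : nfE n t k = 0 := if_neg (fun h => hne (by omega))
    simp [this]
  · intro hmem
    exact absurd (Finset.mem_Icc.mpr ⟨by omega, by have := k.isLt; omega⟩) hmem

lemma phi_coord0 (h0 : 0 < n) (p x : Fin n → ℂ) :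
    phi n p x ⟨0, h0⟩ = x ⟨0, h0⟩ * p ⟨0, h0⟩ := by
  rw [phi_apply, Finset.sum_apply]
  rw [Finset.sum_eq_single (⟨0, h0⟩ : Fin n)]
  · rfl
  · intro l _ hl
    have hl' : 0 < (l:ℕ) := by
      rcases Nat.eq_zero_or_pos (l:ℕ) with h | h
      · exact absurd (Fin.ext h : l = ⟨0, h0⟩) hl
      · exact h
    show x l * pw n p (l:ℕ) ⟨0, h0⟩ = 0
    rw [pw_support p _ _ hl', mul_zero]
  · intro h; exact absurd (Finset.mem_univ _) h

lemma phi_coord1 (h0 : 0 < n) (h1 : 1 < n) (p x : Fin n → ℂ) :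
    phi n p x ⟨1, h1⟩ = x ⟨0, h0⟩ * p ⟨1, h1⟩ + x ⟨1, h1⟩ * p ⟨0, h0⟩ ^ 2 := by
  rw [phi_apply, Finset.sum_apply]
  have hne : (⟨0, h0⟩ : Fin n) ≠ ⟨1, h1⟩ := Fin.ne_of_val_ne (by simp)
  calc (∑ l : Fin n, (x l • pw n p (l:ℕ)) ⟨1, h1⟩)
      = ∑ l ∈ ({⟨0, h0⟩, ⟨1, h1⟩} : Finset (Fin n)), (x l • pw n p (l:ℕ)) ⟨1, h1⟩ := by
        symm
        apply Finset.sum_subset (Finset.subset_univ _)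
        intro l _ hl
        simp only [Finset.mem_insert, Finset.mem_singleton] at hl
        push_neg at hl
        have : 1 < (l:ℕ) := by
          rcases hl with ⟨ha, hb⟩
          have ha' : (l:ℕ) ≠ 0 := fun h => ha (Fin.ext h)
          have hb' : (l:ℕ) ≠ 1 := fun h => hb (Fin.ext h)
          omega
        show x l * pw n p (l:ℕ) ⟨1, h1⟩ = 0
        rw [pw_support p _ _ this, mul_zero]
    _ = (x ⟨0,h0⟩ • pw n p 0) ⟨1,h1⟩ + (x ⟨1,h1⟩ • pw n p 1) ⟨1,h1⟩ := by
        rw [Finset.sum_pair hne]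
    _ = x ⟨0, h0⟩ * p ⟨1, h1⟩ + x ⟨1, h1⟩ * p ⟨0, h0⟩ ^ 2 := by
        rw [show ((x ⟨1,h1⟩ • pw n p 1) ⟨1,h1⟩ : ℂ) = x ⟨1,h1⟩ * pw n p 1 ⟨1,h1⟩ from rfl]
        rw [pw_lowest p 1 ⟨1,h1⟩ ⟨0,h0⟩ rfl rfl]
        rfl


end Aux

/-- for `n ≥ 5` and `α₃ ≠ 0`, `TP₀(0,0,α₃,…,αₙ)` is isomorphic to
`TP₀(0,0,α₃,0,…,0)`. -/
theorem stmt_9 (n : ℕ) (hn : 5 ≤ n) (α : ℕ → ℂ)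
    (h1 : α 1 = 0) (h2 : α 2 = 0) (h3 : α 3 ≠ 0) :
    TPIso n (brTP0 n α) (brTP0 n fun t => if t = 3 then α 3 else 0) := by
  have h0n : 0 < n := by omega
  have h1n : 1 < n := by omega
  have h2n : 2 < n := by omega
  obtain ⟨p, hp1, hpw⟩ := cube_root hn (fun k => (α 3)⁻¹ * α ((k:ℕ)+1))
    (fun k hk => by simp [hk, h1]) (fun k hk => by simp [hk, h2])
    (fun k hk => by simp [hk, inv_mul_cancel₀ h3])
  have hp0 : p ⟨0, h0n⟩ = 1 := hp1 _ rfl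
  let e : (Fin n → ℂ) ≃ₗ[ℂ] (Fin n → ℂ) :=
    LinearEquiv.ofBijective (phi n p) (phi_bijective p ⟨0, h0n⟩ rfl hp0)
  have he : ∀ u, e u = phi n p u := fun u => rfl
  -- the sum ∑ α_t e_t equals α₃ • p³
  have hS : (∑ t ∈ Finset.Icc 1 n, α t • nfE n t) = α 3 • pw n p 2 := by
    funext k
    rw [sum_alpha, hpw]
    show α ((k:ℕ)+1) = α 3 * ((α 3)⁻¹ * α ((k:ℕ)+1))
    rw [← mul_assoc, mul_inv_cancel₀ h3, one_mul]
  -- φ maps the simple generator sum to α₃ • p³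
  have hS' : phi n p (∑ t ∈ Finset.Icc 1 n, (if t = 3 then α 3 else 0) • nfE n t)
      = α 3 • pw n p 2 := by
    rw [map_sum]
    rw [Finset.sum_eq_single 3]
    · rw [if_pos rfl, map_smul]
      congr 1
      rw [phi_apply]
      calc (∑ k : Fin n, nfE n 3 k • pw n p (k:ℕ))
          = ∑ k : Fin n, (if (k:ℕ) = 2 then pw n p (k:ℕ) else 0) := by
            refine Finset.sum_congr rfl fun k _ => ?_
            by_cases h : (k:ℕ) = 2
            · rw [if_pos h, show nfE n 3 k = 1 from if_pos (by omega), one_smul]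
            · rw [if_neg h, show nfE n 3 k = 0 from if_neg (by omega), zero_smul]
        _ = pw n p 2 := sum_pick h2n _
    · intro t _ hne
      rw [if_neg hne, zero_smul, map_zero]
    · intro hmem
      exact absurd (Finset.mem_Icc.mpr ⟨by omega, by omega⟩) hmem
  -- scalar preservation
  have hsc : ∀ u w : Fin n → ℂ,
      nfCoeff n (phi n p u) 1 * nfCoeff n (phi n p w) 2
        - nfCoeff n (phi n p u) 2 * nfCoeff n (phi n p w) 1
      = nfCoeff n u 1 * nfCoeff n w 2 - nfCoeff n u 2 * nfCoeff n w 1 := by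
    intro u w
    rw [show (1:ℕ) = 0 + 1 from rfl, show (2:ℕ) = 1 + 1 from rfl]
    rw [nfCoeff_succ _ 0 h0n, nfCoeff_succ _ 1 h1n, nfCoeff_succ _ 0 h0n,
      nfCoeff_succ _ 1 h1n, nfCoeff_succ _ 0 h0n, nfCoeff_succ _ 1 h1n,
      nfCoeff_succ _ 0 h0n, nfCoeff_succ _ 1 h1n]
    rw [phi_coord0 h0n, phi_coord0 h0n, phi_coord1 h0n h1n, phi_coord1 h0n h1n, hp0]
    ring
  -- forward bracket preservation
  have hbr : ∀ u w : Fin n → ℂ,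
      phi n p (brTP0 n (fun t => if t = 3 then α 3 else 0) u w)
        = brTP0 n α (phi n p u) (phi n p w) := by
    intro u w
    unfold brTP0
    rw [map_smul, hS', hS, hsc]
  refine ⟨e.symm, fun x y => ?_, fun x y => ?_⟩
  · apply e.injective
    rw [e.apply_symm_apply, he, phi_mul, ← he, ← he, e.apply_symm_apply, e.apply_symm_apply]
  · apply e.injective
    rw [e.apply_symm_apply, he, hbr, ← he, ← he, e.apply_symm_apply, e.apply_symm_apply]
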